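/- Let p = 2, m ≥ 1, k = 2^m - 2 (so k is even), and K a field of characteristic 2. Define Gz(f,g) = Σ_{i=0}^{k/2 - 1} (f^{(i)} g^{(k-i)} + f^{(k-i)} g^{(i)}) + f^{(k/2)} g^{(k/2)} in the divided power algebra O(1;N) with 2^N > k/2 (i.e., m ≤ N+1). Then Gz : F_1 ⊗ F_1 → F_k is invariant under vect(1;N): L_D(Gz(f,g)) = Gz(L_D f, g) + Gz(f, L_D g) for all D ∈ vect(1;N). -/
import Mathlib


open Finset

/-- Multiplication in the divided power algebra `O(1;N)` truncated at `n = p^N`;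
elements are given by their coefficients in the basis `u^{(r)}`, `0 ≤ r < n`,
and `u^{(r)} · u^{(s)} = C(r+s, r) u^{(r+s)}` (zero if `r+s ≥ n`). -/
def dpMul {K : Type*} [Field K] (n : ℕ) (f g : ℕ → K) : ℕ → K :=
  fun t => if t < n then ∑ i ∈ Finset.range (t + 1), ((t.choose i : K) * f i * g (t - i)) else 0

/-- The distinguished derivation `∂` of `O(1;N)`: `∂(u^{(r)}) = u^{(r-1)}`. -/
def dpDer {K : Type*} [Field K] (n : ℕ) (f : ℕ → K) : ℕ → K :=
  fun r => if r + 1 < n then f (r + 1) else 0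

/-- Membership in `O(1;N)`: coefficients vanish in degrees `≥ n`. -/
def dpSupp {K : Type*} [Field K] (n : ℕ) (f : ℕ → K) : Prop := ∀ r, n ≤ r → f r = 0

/-- Berezin-type integral: the coefficient of `u^{(n-1)}`. -/
def dpInt {K : Type*} [Field K] (n : ℕ) (f : ℕ → K) : K := f (n - 1)

/-- Lie derivative along `h∂ ∈ vect(1;N)` acting on the weighted density module
`F_a`: `L_{h∂}(f) = h·∂f + a·f·∂h`. -/
def dpLie {K : Type*} [Field K] (n : ℕ) (a : K) (h f : ℕ → K) : ℕ → K :=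
  dpMul n h (dpDer n f) + a • dpMul n f (dpDer n h)

/-- The characteristic-2 analog of the Grozman operator, k = 2^m - 2 even:
Gz(f,g) = Σ_{i=0}^{k/2-1} (f^{(i)} g^{(k-i)} + f^{(k-i)} g^{(i)}) + f^{(k/2)} g^{(k/2)}. -/
def GzTwo {K : Type*} [Field K] (n k : ℕ) (f g : ℕ → K) : ℕ → K :=
  (∑ i ∈ Finset.range (k / 2),
    (dpMul n ((dpDer n)^[i] f) ((dpDer n)^[k - i] g)
      + dpMul n ((dpDer n)^[k - i] f) ((dpDer n)^[i] g)))
  + dpMul n ((dpDer n)^[k / 2] f) ((dpDer n)^[k / 2] g)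

section Helpers

variable {V : Type*} [AddCommMonoid V]

/-- Triangular double-sum reindexing. -/
lemma gz_sum_triangle (n : ℕ) (φ : ℕ → ℕ → V) :
    ∑ i ∈ range (n+1), ∑ j ∈ range (i+1), φ i j
      = ∑ j ∈ range (n+1), ∑ l ∈ range (n+1-j), φ (j+l) j := by
  have h1 : ∀ i ∈ range (n+1), ∑ j ∈ range (i+1), φ i j
      = ∑ j ∈ range (n+1), if j ≤ i then φ i j else 0 := by
    intro i hi
    rw [mem_range] at hi
    rw [← Finset.sum_subset (Finset.range_subset_range.2 (by omega : i+1 ≤ n+1))]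
    · exact Finset.sum_congr rfl fun j hj => by
        rw [mem_range] at hj; rw [if_pos (by omega)]
    · intro j _ hj; rw [mem_range] at hj; rw [if_neg (by omega)]
  rw [Finset.sum_congr rfl h1, Finset.sum_comm]
  refine Finset.sum_congr rfl fun j hj => ?_
  rw [mem_range] at hj
  have h2 : (range (n+1)).filter (fun i => j ≤ i) = Ico j (n+1) := by
    ext x; simp only [mem_filter, mem_range, mem_Ico]; omega
  rw [← Finset.sum_filter, h2, Finset.sum_Ico_eq_sum_range]

lemma gz_sum_triangle_comm (n : ℕ) (φ : ℕ → ℕ → V) :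
    ∑ u ∈ range (n+1), ∑ v ∈ range (n+1-u), φ u v
      = ∑ v ∈ range (n+1), ∑ u ∈ range (n+1-v), φ u v := by
  have t1 := gz_sum_triangle n (fun i j => φ j (i - j))
  have t2 := gz_sum_triangle n (fun i j => φ (i - j) j)
  have s1 : ∑ j ∈ range (n+1), ∑ l ∈ range (n+1-j), φ j ((j+l) - j)
      = ∑ u ∈ range (n+1), ∑ v ∈ range (n+1-u), φ u v :=
    Finset.sum_congr rfl fun j _ => Finset.sum_congr rfl fun l _ => by
      rw [Nat.add_sub_cancel_left]
  have s2 : ∑ j ∈ range (n+1), ∑ l ∈ range (n+1-j), φ ((j+l) - j) j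
      = ∑ v ∈ range (n+1), ∑ u ∈ range (n+1-v), φ u v :=
    Finset.sum_congr rfl fun j _ => Finset.sum_congr rfl fun l _ => by
      rw [Nat.add_sub_cancel_left]
  have mid : ∀ i ∈ range (n+1), ∑ j ∈ range (i+1), φ j (i - j)
      = ∑ j ∈ range (i+1), φ (i - j) j := by
    intro i _
    rw [← Finset.sum_range_reflect (fun j => φ (i - j) j) (i+1)]
    refine Finset.sum_congr rfl fun j hj => ?_
    rw [mem_range] at hj
    have e1 : i + 1 - 1 - j = i - j := by omega
    have e2 : i - (i - j) = j := by omega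
    rw [e1, e2]
  calc ∑ u ∈ range (n+1), ∑ v ∈ range (n+1-u), φ u v
      = ∑ i ∈ range (n+1), ∑ j ∈ range (i+1), φ j (i - j) := by rw [t1, s1]
    _ = ∑ i ∈ range (n+1), ∑ j ∈ range (i+1), φ (i - j) j := Finset.sum_congr rfl mid
    _ = ∑ v ∈ range (n+1), ∑ u ∈ range (n+1-v), φ u v := by rw [t2, s2]

end Helpers

section Algebra

variable {K : Type*} [Field K]

lemma gz_choose_trinom (s a b : ℕ) :
    (s+a+b).choose b * (s+a).choose s = (s+a+b).choose s * (a+b).choose a := by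
  have e1 : (s+a).choose s * s.factorial * a.factorial = (s+a).factorial := by
    have := Nat.choose_mul_factorial_mul_factorial (Nat.le_add_right s a)
    rwa [Nat.add_sub_cancel_left] at this
  have e2 : (s+a+b).choose b * b.factorial * (s+a).factorial = (s+a+b).factorial := by
    have h : b ≤ s+a+b := Nat.le_add_left b (s+a)
    have := Nat.choose_mul_factorial_mul_factorial h
    rwa [Nat.add_sub_cancel] at this
  have e3 : (s+a+b).choose s * s.factorial * (a+b).factorial = (s+a+b).factorial := by
    have h : s ≤ s+a+b := by omega
    have := Nat.choose_mul_factorial_mul_factorial h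
    have h2 : s+a+b-s = a+b := by omega
    rwa [h2] at this
  have e4 : (a+b).choose a * a.factorial * b.factorial = (a+b).factorial := by
    have := Nat.choose_mul_factorial_mul_factorial (Nat.le_add_right a b)
    rwa [Nat.add_sub_cancel_left] at this
  have hpos : 0 < s.factorial * a.factorial * b.factorial :=
    Nat.mul_pos (Nat.mul_pos s.factorial_pos a.factorial_pos) b.factorial_pos
  apply Nat.eq_of_mul_eq_mul_right hpos
  calc (s+a+b).choose b * (s+a).choose s * (s.factorial * a.factorial * b.factorial)
      = ((s+a+b).choose b * b.factorial) * ((s+a).choose s * s.factorial * a.factorial) := by ring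
    _ = ((s+a+b).choose b * b.factorial) * (s+a).factorial := by rw [e1]
    _ = (s+a+b).factorial := by rw [← e2]
    _ = ((s+a+b).choose s * s.factorial) * (a+b).factorial := by rw [← e3]
    _ = (s+a+b).choose s * (a+b).choose a * (s.factorial * a.factorial * b.factorial) := by
        rw [← e4]; ring

lemma gz_choose_subset {t i j : ℕ} (hj : j ≤ i) (hi : i ≤ t) :
    t.choose i * i.choose j = t.choose j * (t-j).choose (i-j) := by
  have h := gz_choose_trinom j (i-j) (t-i)
  have h1 : j + (i-j) = i := by omega
  have h2 : j + (i-j) + (t-i) = t := by omega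
  have h3 : (i-j) + (t-i) = t - j := by omega
  rw [h2, h1, h3] at h
  have h4 : t.choose (t-i) = t.choose i := Nat.choose_symm hi
  rw [h4] at h
  exact h

lemma dpMul_comm (n : ℕ) (f g : ℕ → K) : dpMul n f g = dpMul n g f := by
  funext t
  unfold dpMul
  by_cases ht : t < n
  · rw [if_pos ht, if_pos ht, ← Finset.sum_range_reflect]
    refine Finset.sum_congr rfl fun i hi => ?_
    rw [mem_range] at hi
    have e1 : t + 1 - 1 - i = t - i := by omega
    have e2 : t - (t - i) = i := by omega
    have e3 : t.choose (t - i) = t.choose i := Nat.choose_symm (by omega)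
    rw [e1, e2, e3]
    ring
  · rw [if_neg ht, if_neg ht]

lemma dpMul_zero_left (n : ℕ) (g : ℕ → K) : dpMul n (0 : ℕ → K) g = 0 := by
  funext t
  unfold dpMul
  by_cases ht : t < n
  · rw [if_pos ht]
    simp
  · rw [if_neg ht]; rfl

lemma dpMul_add_left (n : ℕ) (f f' g : ℕ → K) :
    dpMul n (f + f') g = dpMul n f g + dpMul n f' g := by
  funext t
  unfold dpMul
  by_cases ht : t < n
  · simp only [Pi.add_apply, if_pos ht, ← Finset.sum_add_distrib]
    exact Finset.sum_congr rfl fun i _ => by ring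
  · simp only [Pi.add_apply, if_neg ht]; ring

lemma dpMul_smul_left (n : ℕ) (c : K) (f g : ℕ → K) :
    dpMul n (c • f) g = c • dpMul n f g := by
  funext t
  unfold dpMul
  by_cases ht : t < n
  · simp only [Pi.smul_apply, smul_eq_mul, if_pos ht, Finset.mul_sum]
    exact Finset.sum_congr rfl fun i _ => by ring
  · simp only [Pi.smul_apply, smul_eq_mul, if_neg ht]; ring

lemma dpMul_add_right (n : ℕ) (f g g' : ℕ → K) :
    dpMul n f (g + g') = dpMul n f g + dpMul n f g' := by
  rw [dpMul_comm, dpMul_add_left, dpMul_comm n g f, dpMul_comm n g' f]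

lemma dpMul_smul_right (n : ℕ) (c : K) (f g : ℕ → K) :
    dpMul n f (c • g) = c • dpMul n f g := by
  rw [dpMul_comm, dpMul_smul_left, dpMul_comm]

lemma dpMul_sum_left (n : ℕ) {ι : Type*} (s : Finset ι) (F : ι → ℕ → K) (g : ℕ → K) :
    dpMul n (∑ i ∈ s, F i) g = ∑ i ∈ s, dpMul n (F i) g := by
  induction s using Finset.cons_induction with
  | empty => simpa using dpMul_zero_left n g
  | cons a s ha ih =>
    rw [Finset.sum_cons, Finset.sum_cons, dpMul_add_left, ih]

lemma dpMul_sum_right (n : ℕ) {ι : Type*} (s : Finset ι) (f : ℕ → K) (G : ι → ℕ → K) :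
    dpMul n f (∑ i ∈ s, G i) = ∑ i ∈ s, dpMul n f (G i) := by
  rw [dpMul_comm, dpMul_sum_left]
  exact Finset.sum_congr rfl fun i _ => dpMul_comm n (G i) f

lemma dpMul_assoc (n : ℕ) (f g h : ℕ → K) :
    dpMul n (dpMul n f g) h = dpMul n f (dpMul n g h) := by
  funext t
  unfold dpMul
  by_cases ht : t < n
  · rw [if_pos ht, if_pos ht]
    have hL : ∑ i ∈ range (t+1), (t.choose i : K) *
          (if i < n then ∑ j ∈ range (i+1), (i.choose j : K) * f j * g (i-j) else 0) * h (t-i)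
        = ∑ i ∈ range (t+1), ∑ j ∈ range (i+1),
            (t.choose i : K) * (i.choose j : K) * f j * g (i-j) * h (t-i) := by
      refine Finset.sum_congr rfl fun i hi => ?_
      rw [mem_range] at hi
      rw [if_pos (by omega : i < n), Finset.mul_sum, Finset.sum_mul]
      exact Finset.sum_congr rfl fun j _ => by ring
    rw [hL, gz_sum_triangle t (fun i j => (t.choose i : K) * (i.choose j : K) * f j * g (i-j) * h (t-i))]
    refine Finset.sum_congr rfl fun j hj => ?_
    rw [mem_range] at hj
    rw [if_pos (by omega : t - j < n), Finset.mul_sum]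
    have e : t - j + 1 = t + 1 - j := by omega
    rw [← e]
    refine Finset.sum_congr rfl fun l hl => ?_
    rw [mem_range] at hl
    have e1 : (j+l) - j = l := by omega
    have e2 : t - (j+l) = t - j - l := by omega
    have e3 : (t.choose (j+l)) * ((j+l).choose j) = t.choose j * (t-j).choose l := by
      have := gz_choose_subset (Nat.le_add_right j l) (by omega : j + l ≤ t)
      rwa [Nat.add_sub_cancel_left] at this
    rw [e1, e2]
    have : (t.choose (j+l) : K) * ((j+l).choose j : K) = (t.choose j : K) * ((t-j).choose l : K) := by
      exact_mod_cast congrArg (Nat.cast : ℕ → K) e3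
    calc (t.choose (j+l) : K) * ((j+l).choose j : K) * f j * g l * h (t-j-l)
        = ((t.choose (j+l) : K) * ((j+l).choose j : K)) * (f j * g l * h (t-j-l)) := by ring
      _ = ((t.choose j : K) * ((t-j).choose l : K)) * (f j * g l * h (t-j-l)) := by rw [this]
      _ = (t.choose j : K) * f j * ((t-j).choose l * g l * h (t-j-l)) := by ring
  · rw [if_neg ht, if_neg ht]

end Algebra

section Der

variable {K : Type*} [Field K]

lemma dpDer_add (n : ℕ) (f g : ℕ → K) : dpDer n (f + g) = dpDer n f + dpDer n g := by
  funext r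
  unfold dpDer
  by_cases hr : r + 1 < n
  · simp [hr]
  · simp [hr]

lemma dpDer_smul (n : ℕ) (c : K) (f : ℕ → K) : dpDer n (c • f) = c • dpDer n f := by
  funext r
  unfold dpDer
  by_cases hr : r + 1 < n
  · simp [hr]
  · simp [hr]

lemma dpDer_zero (n : ℕ) : dpDer n (0 : ℕ → K) = 0 := by
  funext r; unfold dpDer; by_cases hr : r + 1 < n <;> simp [hr]

lemma dpDer_sum (n : ℕ) {ι : Type*} (s : Finset ι) (F : ι → ℕ → K) :
    dpDer n (∑ i ∈ s, F i) = ∑ i ∈ s, dpDer n (F i) := by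
  induction s using Finset.cons_induction with
  | empty => simpa using dpDer_zero n
  | cons a s ha ih => rw [Finset.sum_cons, Finset.sum_cons, dpDer_add, ih]

lemma dpDer_iter_add (n : ℕ) (j : ℕ) (f g : ℕ → K) :
    (dpDer n)^[j] (f + g) = (dpDer n)^[j] f + (dpDer n)^[j] g := by
  induction j with
  | zero => simp
  | succ j ih => rw [Function.iterate_succ_apply', ih, dpDer_add,
      Function.iterate_succ_apply', Function.iterate_succ_apply']

lemma dpSupp_dpDer (n : ℕ) (f : ℕ → K) : dpSupp n (dpDer n f) := by
  intro r hr
  unfold dpDer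
  rw [if_neg (by omega)]

lemma dpSupp_iter (n : ℕ) {f : ℕ → K} (hf : dpSupp n f) (j : ℕ) :
    dpSupp n ((dpDer n)^[j] f) := by
  induction j with
  | zero => exact hf
  | succ j ih => rw [Function.iterate_succ_apply']; exact dpSupp_dpDer n _

/-- Key recombination step for the Leibniz rule. -/
lemma gz_rec_smul {V : Type*} [AddCommMonoid V] [Module K V] (r : ℕ) (x : ℕ → ℕ → V) :
    (∑ i ∈ range (r+1), (r.choose i : K) • x (i+1) (r-i))
      + ∑ i ∈ range (r+1), (r.choose i : K) • x i (r-i+1)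
      = ∑ i ∈ range (r+2), ((r+1).choose i : K) • x i (r+1-i) := by
  rw [Finset.sum_range_succ' (fun i => ((r+1).choose i : K) • x i (r+1-i)) (r+1)]
  have e1 : ∀ i ∈ range (r+1), (((r+1).choose (i+1) : ℕ) : K) • x (i+1) (r+1-(i+1))
      = (r.choose i : K) • x (i+1) (r-i) + (r.choose (i+1) : K) • x (i+1) (r-i) := by
    intro i hi
    have h1 : (r+1).choose (i+1) = r.choose i + r.choose (i+1) := Nat.choose_succ_succ' r i
    have h2 : r+1-(i+1) = r-i := by omega
    rw [h1, h2, Nat.cast_add, add_smul]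
  rw [Finset.sum_congr rfl e1, Finset.sum_add_distrib]
  have e2 : ∑ i ∈ range (r+1), (r.choose i : K) • x i (r-i+1)
      = (∑ i ∈ range r, (r.choose (i+1) : K) • x (i+1) (r-(i+1)+1)) + (r.choose 0 : K) • x 0 (r-0+1) :=
    Finset.sum_range_succ' (fun i => (r.choose i : K) • x i (r-i+1)) r
  have e3 : ∑ i ∈ range r, (r.choose (i+1) : K) • x (i+1) (r-(i+1)+1)
      = ∑ i ∈ range r, (r.choose (i+1) : K) • x (i+1) (r-i) := by
    refine Finset.sum_congr rfl fun i hi => ?_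
    rw [mem_range] at hi
    have : r-(i+1)+1 = r-i := by omega
    rw [this]
  have e4 : ∑ i ∈ range (r+1), (r.choose (i+1) : K) • x (i+1) (r-i)
      = ∑ i ∈ range r, (r.choose (i+1) : K) • x (i+1) (r-i) := by
    rw [Finset.sum_range_succ]
    simp [Nat.choose_succ_self]
  rw [e2, e3, ← e4]
  have e5 : r - 0 + 1 = r + 1 - 0 := by omega
  simp only [Nat.choose_zero_right, Nat.cast_one, e5]
  abel

/-- The Leibniz rule for `dpDer` over `dpMul`, valid when `n.choose i` vanishes
    in `K` for `0 < i < n` (e.g. `n = 2^N` in characteristic 2). -/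
lemma dpDer_dpMul (n : ℕ) (hch : ∀ i, 0 < i → i < n → ((n.choose i : ℕ) : K) = 0)
    {f g : ℕ → K} (hf : dpSupp n f) (hg : dpSupp n g) :
    dpDer n (dpMul n f g) = dpMul n (dpDer n f) g + dpMul n f (dpDer n g) := by
  funext r
  show dpDer n (dpMul n f g) r = dpMul n (dpDer n f) g r + dpMul n f (dpDer n g) r
  by_cases hr : r < n
  · have hRHS : dpMul n (dpDer n f) g r + dpMul n f (dpDer n g) r
        = ∑ i ∈ range (r+2), ((r+1).choose i : K) * f i * g (r+1-i) := by
      unfold dpMul dpDer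
      rw [if_pos hr, if_pos hr]
      have hA : ∑ i ∈ range (r+1), (r.choose i : K) * (if i+1 < n then f (i+1) else 0) * g (r-i)
          = ∑ i ∈ range (r+1), (r.choose i : K) * f (i+1) * g (r-i) := by
        refine Finset.sum_congr rfl fun i hi => ?_
        by_cases hn : i + 1 < n
        · rw [if_pos hn]
        · rw [if_neg hn, hf (i+1) (by omega)]
      have hB : ∑ i ∈ range (r+1), (r.choose i : K) * f i * (if (r-i)+1 < n then g ((r-i)+1) else 0)
          = ∑ i ∈ range (r+1), (r.choose i : K) * f i * g ((r-i)+1) := by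
        refine Finset.sum_congr rfl fun i hi => ?_
        by_cases hn : (r-i) + 1 < n
        · rw [if_pos hn]
        · rw [if_neg hn, hg ((r-i)+1) (by omega)]
      rw [hA, hB]
      have := gz_rec_smul (K := K) (V := K) r (fun a b => f a * g b)
      simp only [smul_eq_mul, ← mul_assoc] at this
      exact this
    rw [hRHS]
    unfold dpDer
    by_cases hr1 : r + 1 < n
    · rw [if_pos hr1]
      unfold dpMul
      rw [if_pos hr1]
    · rw [if_neg hr1]
      have hn : r + 1 = n := by omega
      symm
      apply Finset.sum_eq_zero
      intro i hi
      rw [mem_range] at hi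
      rcases Nat.eq_zero_or_pos i with h0 | hpos
      · subst h0
        rw [hg (r+1-0) (by omega)]
        ring
      · rcases Nat.lt_or_ge i (r+1) with hlt | hge
        · rw [hn, hch i hpos (by omega)]
          ring
        · have : i = r + 1 := by omega
          subst this
          rw [hf (r+1) (by omega)]
          ring
  · unfold dpDer dpMul
    rw [if_neg (by omega : ¬ (r + 1 < n)), if_neg hr, if_neg hr]
    ring

/-- Iterated Leibniz rule. -/
lemma dpDer_iter_dpMul (n : ℕ) (hch : ∀ i, 0 < i → i < n → ((n.choose i : ℕ) : K) = 0)
    {f g : ℕ → K} (hf : dpSupp n f) (hg : dpSupp n g) (j : ℕ) :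
    (dpDer n)^[j] (dpMul n f g)
      = ∑ s ∈ range (j+1), (j.choose s : K) • dpMul n ((dpDer n)^[s] f) ((dpDer n)^[j-s] g) := by
  induction j with
  | zero => simp
  | succ j ih =>
    rw [Function.iterate_succ_apply', ih, dpDer_sum]
    have e1 : ∀ s ∈ range (j+1),
        dpDer n ((j.choose s : K) • dpMul n ((dpDer n)^[s] f) ((dpDer n)^[j-s] g))
        = (j.choose s : K) • dpMul n ((dpDer n)^[s+1] f) ((dpDer n)^[j-s] g)
          + (j.choose s : K) • dpMul n ((dpDer n)^[s] f) ((dpDer n)^[(j-s)+1] g) := by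
      intro s hs
      rw [dpDer_smul, dpDer_dpMul n hch (dpSupp_iter n hf s) (dpSupp_iter n hg (j-s)),
        smul_add, Function.iterate_succ_apply', Function.iterate_succ_apply']
    rw [Finset.sum_congr rfl e1, Finset.sum_add_distrib]
    have e2 : ∀ s ∈ range (j+1),
        (j.choose s : K) • dpMul n ((dpDer n)^[s] f) ((dpDer n)^[(j-s)+1] g)
        = (j.choose s : K) • dpMul n ((dpDer n)^[s] f) ((dpDer n)^[(j-s)+1] g) := fun _ _ => rfl
    have := gz_rec_smul (K := K) (r := j)
      (fun a b => dpMul n ((dpDer n)^[a] f) ((dpDer n)^[b] g))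
    exact this

end Der

section Gz

variable {K : Type*} [Field K]

lemma GzTwo_eq_sum (n k : ℕ) (hk2 : k % 2 = 0) (f g : ℕ → K) :
    GzTwo n k f g = ∑ j ∈ range (k+1), dpMul n ((dpDer n)^[j] f) ((dpDer n)^[k-j] g) := by
  set B : ℕ → ℕ → K := fun j => dpMul n ((dpDer n)^[j] f) ((dpDer n)^[k-j] g) with hB
  set q := k / 2 with hq
  have hk : k = 2 * q := by omega
  have hsplit : ∑ j ∈ range (k+1), B j
      = (∑ j ∈ range (q+1), B j) + ∑ j ∈ Ico (q+1) (k+1), B j := by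
    rw [Finset.sum_range_add_sum_Ico _ (by omega : q + 1 ≤ k + 1)]
  have h2 : ∑ j ∈ Ico (q+1) (k+1), B j = ∑ i ∈ range q, B (q+1+i) := by
    rw [Finset.sum_Ico_eq_sum_range]
    have : k + 1 - (q+1) = q := by omega
    rw [this]
  have h3 : ∑ i ∈ range q, B (q+1+i) = ∑ i ∈ range q, B (k-i) := by
    rw [← Finset.sum_range_reflect (fun i => B (q+1+i)) q]
    refine Finset.sum_congr rfl fun i hi => ?_
    rw [mem_range] at hi
    have : q + 1 + (q - 1 - i) = k - i := by omega
    rw [this]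
  have h4 : ∑ j ∈ range (q+1), B j = (∑ j ∈ range q, B j) + B q := Finset.sum_range_succ B q
  unfold GzTwo
  rw [hsplit, h2, h3, h4]
  have h5 : ∀ i ∈ range q, dpMul n ((dpDer n)^[i] f) ((dpDer n)^[k-i] g)
        + dpMul n ((dpDer n)^[k-i] f) ((dpDer n)^[i] g)
      = B i + B (k - i) := by
    intro i hi
    rw [mem_range] at hi
    have : k - (k - i) = i := by omega
    rw [hB]
    simp only []
    rw [this]
  rw [Finset.sum_congr rfl h5, Finset.sum_add_distrib]
  have h6 : dpMul n ((dpDer n)^[k/2] f) ((dpDer n)^[k/2] g) = B q := by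
    show dpMul n ((dpDer n)^[k/2] f) ((dpDer n)^[k/2] g)
        = dpMul n ((dpDer n)^[q] f) ((dpDer n)^[k-q] g)
    have e : k - q = q := by omega
    rw [e, hq]
  rw [h6]
  abel

lemma gz_two_zero [CharP K 2] : (2 : K) = 0 := CharTwo.two_eq_zero

lemma gz_odd_cast_one [CharP K 2] {x : ℕ} (h : Odd x) : (x : K) = 1 := by
  obtain ⟨c, rfl⟩ := h
  push_cast
  rw [gz_two_zero]
  ring

lemma gz_even_cast_zero [CharP K 2] {x : ℕ} (h : x % 2 = 0) : (x : K) = 0 := by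
  obtain ⟨c, rfl⟩ : ∃ c, x = 2 * c := ⟨x / 2, by omega⟩
  push_cast
  rw [gz_two_zero]
  ring

/-- All binomial coefficients of `2^m - 1` are odd. -/
lemma gz_odd_choose (m : ℕ) : ∀ x, x ≤ 2^m - 1 → Odd ((2^m - 1).choose x) := by
  have h1 : 1 ≤ 2^m := Nat.one_le_two_pow
  intro x
  induction x with
  | zero => intro _; simpa using odd_one
  | succ x ih =>
    intro hx
    have hodd := ih (by omega)
    have hp : (2^m - 1).choose x + (2^m - 1).choose (x+1) = (2^m).choose (x+1) := by
      have e : 2^m - 1 + 1 = 2^m := by omega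
      rw [← Nat.choose_succ_succ' (2^m - 1) x, e]
    have heven : 2 ∣ (2^m).choose (x+1) :=
      Nat.Prime.dvd_choose_pow Nat.prime_two (by omega) (by omega)
    obtain ⟨c, hc⟩ := hodd
    obtain ⟨d, hd⟩ := heven
    exact ⟨(2^m).choose (x+1) / 2 - c - 1, by omega⟩

/-- mod-2 congruence of binomials from the trinomial identity. -/
lemma gz_trinom_cast [CharP K 2] {m k : ℕ} (hm : 1 ≤ m) (hk : k = 2^m - 2)
    (s a b : ℕ) (hsum : s + a + b = k + 1) :
    (((s+a).choose s : ℕ) : K) = (((a+b).choose a : ℕ) : K) := by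
  have h2 : 2 ≤ 2^m := by
    calc 2 = 2^1 := rfl
    _ ≤ 2^m := Nat.pow_le_pow_right (by norm_num) hm
  have hk1 : k + 1 = 2^m - 1 := by omega
  have hb : ((k+1).choose b : K) = 1 := by
    rw [hk1]; exact gz_odd_cast_one (gz_odd_choose m b (by omega))
  have hs : ((k+1).choose s : K) = 1 := by
    rw [hk1]; exact gz_odd_cast_one (gz_odd_choose m s (by omega))
  have h := congrArg (fun x : ℕ => (x : K)) (gz_choose_trinom s a b)
  simp only [Nat.cast_mul] at h
  rw [hsum] at h
  rw [hb, hs, one_mul, one_mul] at h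
  exact h

end Gz

section Coeff

variable {K : Type*} [Field K]

lemma gz_coeff [CharP K 2] {m k : ℕ} (hm : 1 ≤ m) (hk : k = 2^m - 2)
    (s a : ℕ) (hs : s < k+2) (ha : a < k+2-s) :
    (if 1 ≤ a then (((s+a-1).choose s : ℕ) : K) else 0)
    + (if 1 ≤ s then (((s-1+a).choose a : ℕ) : K) else 0)
    + (if s+a ≤ k then (((k-a).choose s : ℕ) : K) else 0)
    + (if 1 ≤ s then (((k-a).choose (s-1) : ℕ) : K) else 0)
    = if s = 0 ∧ (a = 0 ∨ a = k+1) then 1 else 0 := by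
  have h2 : 2 ≤ 2^m := by
    calc 2 = 2^1 := rfl
    _ ≤ 2^m := Nat.pow_le_pow_right (by norm_num) hm
  have hk1 : k + 1 = 2^m - 1 := by omega
  have hodd : ∀ x, x ≤ k+1 → ((k+1).choose x : K) = 1 := by
    intro x hx
    rw [hk1]
    exact gz_odd_cast_one (gz_odd_choose m x (by omega))
  have hsa : s + a ≤ k + 1 := by omega
  rcases s with _ | u
  · -- s = 0
    rw [if_neg (by omega : ¬ 1 ≤ 0), if_neg (by omega : ¬ 1 ≤ 0)]
    rcases a with _ | v
    · -- a = 0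
      rw [if_neg (by omega : ¬ 1 ≤ 0), if_pos (by omega : 0 + 0 ≤ k)]
      rw [if_pos (by exact ⟨rfl, Or.inl rfl⟩)]
      simp
    · -- a = v + 1
      rw [if_pos (by omega : 1 ≤ v + 1)]
      have e1 : 0 + (v+1) - 1 = v := by omega
      rw [e1, Nat.choose_zero_right]
      by_cases hvk : v + 1 ≤ k
      · rw [if_pos (by omega : 0 + (v+1) ≤ k), Nat.choose_zero_right]
        rw [if_neg (by omega : ¬ (0 = 0 ∧ (v + 1 = 0 ∨ v + 1 = k + 1)))]
        push_cast
        linear_combination gz_two_zero (K := K)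
      · have hv : v + 1 = k + 1 := by omega
        rw [if_neg (by omega : ¬ (0 + (v+1) ≤ k))]
        rw [if_pos (by exact ⟨rfl, Or.inr hv⟩)]
        push_cast
        ring
  · -- s = u + 1
    rw [if_pos (by omega : 1 ≤ u + 1), if_pos (by omega : 1 ≤ u + 1)]
    rw [if_neg (by omega : ¬ (u + 1 = 0 ∧ (a = 0 ∨ a = k + 1)))]
    have e2 : u + 1 - 1 + a = u + a := by omega
    rw [e2]
    have e3 : u + 1 - 1 = u := by omega
    rw [e3]
    rcases a with _ | v
    · -- a = 0
      rw [if_neg (by omega : ¬ 1 ≤ 0)]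
      simp only [Nat.add_zero, Nat.sub_zero, Nat.choose_zero_right, Nat.cast_one]
      by_cases huk : u + 1 ≤ k
      · rw [if_pos huk]
        have hp : k.choose u + k.choose (u+1) = (k+1).choose (u+1) :=
          (Nat.choose_succ_succ' k u).symm
        have hcc : (k.choose (u+1) : K) + (k.choose u : K) = 1 := by
          rw [← Nat.cast_add, Nat.add_comm, hp]
          exact hodd (u+1) (by omega)
        linear_combination hcc + gz_two_zero (K := K)
      · have hu : u = k := by omega
        rw [if_neg huk, hu, Nat.choose_self, Nat.cast_one]
        linear_combination gz_two_zero (K := K)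
    · -- a = v + 1
      rw [if_pos (by omega : 1 ≤ v + 1)]
      have e4 : u + 1 + (v + 1) - 1 = u + v + 1 := by omega
      rw [e4]
      have e5 : (u + (v+1)).choose (v+1) = (u+v+1).choose u := by
        have : u + (v+1) = u + v + 1 := by omega
        rw [this]
        have := Nat.choose_symm (by omega : v + 1 ≤ u + v + 1)
        have e : u + v + 1 - (v+1) = u := by omega
        rw [e] at this
        exact this.symm
      rw [e5]
      have hpair1 : ((u+v+1).choose (u+1) : K) + ((u+v+1).choose u : K)
          = (((u+v+2).choose (u+1) : ℕ) : K) := by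
        rw [← Nat.cast_add, Nat.add_comm, ← Nat.choose_succ_succ' (u+v+1) u]
      by_cases hk3 : u + 1 + (v + 1) ≤ k
      · rw [if_pos hk3]
        have e6 : k - (v+1) = (k - v - 2) + 1 := by omega
        have hpair2 : (((k-(v+1)).choose (u+1) : ℕ) : K) + (((k-(v+1)).choose u : ℕ) : K)
            = (((k - v).choose (u+1) : ℕ) : K) := by
          rw [← Nat.cast_add, Nat.add_comm]
          have : k - v = (k - (v+1)) + 1 := by omega
          rw [this, ← Nat.choose_succ_succ' (k-(v+1)) u]
        set b := k - u - v - 1 with hb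
        have hb1 : 1 ≤ b := by omega
        have ht1 : (((u+1)+(v+1)).choose (u+1) : K) = ((((v+1)+b).choose (v+1) : ℕ) : K) :=
          gz_trinom_cast hm hk (u+1) (v+1) b (by omega)
        have ht2 : (((u+1)+b).choose (u+1) : K) = (((b+(v+1)).choose b : ℕ) : K) :=
          gz_trinom_cast hm hk (u+1) b (v+1) (by omega)
        have e7 : (u+1)+(v+1) = u+v+2 := by omega
        have e8 : (u+1)+b = k - v := by omega
        rw [e7] at ht1
        rw [e8] at ht2
        have e9 : (b+(v+1)).choose b = ((v+1)+b).choose (v+1) := by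
          have h1 := Nat.choose_symm (by omega : b ≤ b + (v+1))
          have e : b + (v+1) - b = v + 1 := by omega
          rw [e] at h1
          rw [← h1]
          have : b + (v+1) = (v+1) + b := by omega
          rw [this]
        rw [e9] at ht2
        calc ((u+v+1).choose (u+1) : K) + ((u+v+1).choose u : K)
              + ((k-(v+1)).choose (u+1) : K) + ((k-(v+1)).choose u : K)
            = (((u+v+1).choose (u+1) : K) + ((u+v+1).choose u : K))
              + ((((k-(v+1)).choose (u+1) : ℕ) : K) + (((k-(v+1)).choose u : ℕ) : K)) := by ring
          _ = (((u+v+2).choose (u+1) : ℕ) : K) + (((k - v).choose (u+1) : ℕ) : K) := by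
              rw [hpair1, hpair2]
          _ = ((((v+1)+b).choose (v+1) : ℕ) : K) + ((((v+1)+b).choose (v+1) : ℕ) : K) := by
              rw [ht1, ht2]
          _ = 0 := CharTwo.add_self_eq_zero _
      · -- u + v + 2 = k + 1
        have hk4 : u + v + 1 = k := by omega
        rw [if_neg hk3]
        have e10 : k - (v+1) = u := by omega
        rw [e10, Nat.choose_self]
        have : ((u+v+1).choose (u+1) : K) + ((u+v+1).choose u : K) = 1 := by
          rw [hpair1]
          have : u + v + 2 = k + 1 := by omega
          rw [this]
          exact hodd (u+1) (by omega)
        calc ((u+v+1).choose (u+1) : K) + ((u+v+1).choose u : K) + 0 + ((1 : ℕ) : K)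
            = (((u+v+1).choose (u+1) : K) + ((u+v+1).choose u : K)) + 1 := by push_cast; ring
          _ = 1 + 1 := by rw [this]
          _ = 0 := by linear_combination gz_two_zero (K := K)
end Coeff

/-- Triple product `h^{(s)} f^{(a)} g^{(b)}`. -/
def gzT {K : Type*} [Field K] (n : ℕ) (h f g : ℕ → K) (s a b : ℕ) : ℕ → K :=
  dpMul n (dpMul n ((dpDer n)^[s] h) ((dpDer n)^[a] f)) ((dpDer n)^[b] g)

section Sums

variable {K : Type*} [Field K]

lemma gz_rearr1 (n : ℕ) (x y z : ℕ → K) :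
    dpMul n x (dpMul n y z) = dpMul n (dpMul n y x) z := by
  rw [← dpMul_assoc, dpMul_comm n x y]

lemma gz_rearr2 (n : ℕ) (x y z : ℕ → K) :
    dpMul n x (dpMul n y z) = dpMul n (dpMul n z x) y := by
  rw [dpMul_comm n y z, gz_rearr1]

lemma gz_sumA (n k : ℕ) (hch : ∀ i, 0 < i → i < n → ((n.choose i : ℕ) : K) = 0)
    (h f g : ℕ → K) (hh : dpSupp n h) :
    ∑ j ∈ range (k+1), dpMul n ((dpDer n)^[j] (dpMul n h (dpDer n f))) ((dpDer n)^[k-j] g)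
    = ∑ s ∈ range (k+2), ∑ a ∈ range (k+2-s),
        (if 1 ≤ a then (((s+a-1).choose s : ℕ) : K) else 0) • gzT n h f g s a (k+1-s-a) := by
  have step1 : ∀ j ∈ range (k+1),
      dpMul n ((dpDer n)^[j] (dpMul n h (dpDer n f))) ((dpDer n)^[k-j] g)
      = ∑ s ∈ range (j+1), ((j.choose s : ℕ) : K) • gzT n h f g s (j-s+1) (k-j) := by
    intro j _
    rw [dpDer_iter_dpMul n hch hh (dpSupp_dpDer n f) j, dpMul_sum_left]
    refine Finset.sum_congr rfl fun s _ => ?_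
    rw [dpMul_smul_left]
    congr 1
  rw [Finset.sum_congr rfl step1,
    gz_sum_triangle k (fun j s => ((j.choose s : ℕ) : K) • gzT n h f g s (j-s+1) (k-j))]
  rw [Finset.sum_range_succ (fun s => ∑ a ∈ range (k+2-s),
    (if 1 ≤ a then (((s+a-1).choose s : ℕ) : K) else 0) • gzT n h f g s a (k+1-s-a)) (k+1)]
  have hlast : ∑ a ∈ range (k+2-(k+1)),
      (if 1 ≤ a then ((((k+1)+a-1).choose (k+1) : ℕ) : K) else 0) • gzT n h f g (k+1) a (k+1-(k+1)-a) = 0 := by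
    have e : k+2-(k+1) = 1 := by omega
    rw [e, Finset.sum_range_one, if_neg (by omega : ¬ 1 ≤ 0), zero_smul]
  rw [hlast, add_zero]
  refine Finset.sum_congr rfl fun s hs => ?_
  rw [mem_range] at hs
  have e : k+2-s = (k+1-s)+1 := by omega
  rw [e, Finset.sum_range_succ' (fun a =>
    (if 1 ≤ a then (((s+a-1).choose s : ℕ) : K) else 0) • gzT n h f g s a (k+1-s-a)) (k+1-s)]
  rw [if_neg (by omega : ¬ 1 ≤ 0), zero_smul, add_zero]
  refine Finset.sum_congr rfl fun l hl => ?_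
  rw [mem_range] at hl
  rw [if_pos (by omega : 1 ≤ l + 1)]
  have e1 : s + (l+1) - 1 = s + l := by omega
  have e2 : s + l - s + 1 = l + 1 := by omega
  have e3 : k - (s + l) = k+1-s-(l+1) := by omega
  rw [e1, e2, e3]
end Sums

section Sums2

variable {K : Type*} [Field K]

lemma gz_sumB (n k : ℕ) (hch : ∀ i, 0 < i → i < n → ((n.choose i : ℕ) : K) = 0)
    (h f g : ℕ → K) (hf : dpSupp n f) :
    ∑ j ∈ range (k+1), dpMul n ((dpDer n)^[j] (dpMul n f (dpDer n h))) ((dpDer n)^[k-j] g)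
    = ∑ s ∈ range (k+2), ∑ a ∈ range (k+2-s),
        (if 1 ≤ s then (((s-1+a).choose a : ℕ) : K) else 0) • gzT n h f g s a (k+1-s-a) := by
  have step1 : ∀ j ∈ range (k+1),
      dpMul n ((dpDer n)^[j] (dpMul n f (dpDer n h))) ((dpDer n)^[k-j] g)
      = ∑ s ∈ range (j+1), ((j.choose s : ℕ) : K) • gzT n h f g (j-s+1) s (k-j) := by
    intro j _
    rw [dpDer_iter_dpMul n hch hf (dpSupp_dpDer n h) j, dpMul_sum_left]
    refine Finset.sum_congr rfl fun s _ => ?_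
    rw [dpMul_smul_left]
    congr 1
    show dpMul n (dpMul n ((dpDer n)^[s] f) ((dpDer n)^[j-s] (dpDer n h))) ((dpDer n)^[k-j] g)
        = dpMul n (dpMul n ((dpDer n)^[j-s] (dpDer n h)) ((dpDer n)^[s] f)) ((dpDer n)^[k-j] g)
    rw [dpMul_comm n ((dpDer n)^[s] f)]
  rw [Finset.sum_congr rfl step1,
    gz_sum_triangle k (fun j s => ((j.choose s : ℕ) : K) • gzT n h f g (j-s+1) s (k-j))]
  have step2 : ∑ s ∈ range (k+1), ∑ l ∈ range (k+1-s),
        (((s+l).choose s : ℕ) : K) • gzT n h f g ((s+l)-s+1) s (k-(s+l))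
      = ∑ s ∈ range (k+1), ∑ l ∈ range (k+1-s),
        (((s+l).choose s : ℕ) : K) • gzT n h f g (l+1) s (k-s-l) := by
    refine Finset.sum_congr rfl fun s hs => Finset.sum_congr rfl fun l hl => ?_
    rw [mem_range] at hs hl
    have e1 : (s+l)-s+1 = l+1 := by omega
    have e2 : k-(s+l) = k-s-l := by omega
    rw [e1, e2]
  rw [step2,
    gz_sum_triangle_comm k (fun s l => (((s+l).choose s : ℕ) : K) • gzT n h f g (l+1) s (k-s-l))]
  rw [Finset.sum_range_succ' (fun s => ∑ a ∈ range (k+2-s),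
    (if 1 ≤ s then (((s-1+a).choose a : ℕ) : K) else 0) • gzT n h f g s a (k+1-s-a)) (k+1)]
  have h0 : ∑ a ∈ range (k+2-0),
      (if 1 ≤ 0 then (((0-1+a).choose a : ℕ) : K) else 0) • gzT n h f g 0 a (k+1-0-a) = 0 :=
    Finset.sum_eq_zero fun a _ => by rw [if_neg (by omega : ¬ 1 ≤ 0), zero_smul]
  rw [h0, add_zero]
  refine Finset.sum_congr rfl fun u hu => ?_
  rw [mem_range] at hu
  have e : k+2-(u+1) = k+1-u := by omega
  rw [e]
  refine Finset.sum_congr rfl fun a ha => ?_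
  rw [mem_range] at ha
  rw [if_pos (by omega : 1 ≤ u+1)]
  have e1 : u+1-1+a = a+u := by omega
  have e2 : k+1-(u+1)-a = k-a-u := by omega
  rw [e1, e2]

lemma gz_sumC (n k : ℕ) (hch : ∀ i, 0 < i → i < n → ((n.choose i : ℕ) : K) = 0)
    (h f g : ℕ → K) (hh : dpSupp n h) :
    ∑ j ∈ range (k+1), dpMul n ((dpDer n)^[j] f) ((dpDer n)^[k-j] (dpMul n h (dpDer n g)))
    = ∑ s ∈ range (k+2), ∑ a ∈ range (k+2-s),
        (if s+a ≤ k then (((k-a).choose s : ℕ) : K) else 0) • gzT n h f g s a (k+1-s-a) := by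
  have step1 : ∀ j ∈ range (k+1),
      dpMul n ((dpDer n)^[j] f) ((dpDer n)^[k-j] (dpMul n h (dpDer n g)))
      = ∑ t ∈ range (k+1-j), (((k-j).choose t : ℕ) : K) • gzT n h f g t j ((k-j)-t+1) := by
    intro j hj
    rw [mem_range] at hj
    rw [dpDer_iter_dpMul n hch hh (dpSupp_dpDer n g) (k-j), dpMul_sum_right]
    have e : k+1-j = (k-j)+1 := by omega
    rw [e]
    refine Finset.sum_congr rfl fun t _ => ?_
    rw [dpMul_smul_right]
    congr 1
    show dpMul n ((dpDer n)^[j] f)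
        (dpMul n ((dpDer n)^[t] h) ((dpDer n)^[(k-j)-t] (dpDer n g))) = _
    rw [gz_rearr1]
    rfl
  rw [Finset.sum_congr rfl step1,
    gz_sum_triangle_comm k (fun j t => (((k-j).choose t : ℕ) : K) • gzT n h f g t j ((k-j)-t+1))]
  rw [Finset.sum_range_succ (fun s => ∑ a ∈ range (k+2-s),
    (if s+a ≤ k then (((k-a).choose s : ℕ) : K) else 0) • gzT n h f g s a (k+1-s-a)) (k+1)]
  have hlast : ∑ a ∈ range (k+2-(k+1)),
      (if (k+1)+a ≤ k then (((k-a).choose (k+1) : ℕ) : K) else 0) • gzT n h f g (k+1) a (k+1-(k+1)-a) = 0 := by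
    have e : k+2-(k+1) = 1 := by omega
    rw [e, Finset.sum_range_one, if_neg (by omega : ¬ (k+1)+0 ≤ k), zero_smul]
  rw [hlast, add_zero]
  refine Finset.sum_congr rfl fun s hs => ?_
  rw [mem_range] at hs
  have e : k+2-s = (k+1-s)+1 := by omega
  rw [e, Finset.sum_range_succ (fun a =>
    (if s+a ≤ k then (((k-a).choose s : ℕ) : K) else 0) • gzT n h f g s a (k+1-s-a)) (k+1-s)]
  rw [if_neg (by omega : ¬ s+(k+1-s) ≤ k), zero_smul, add_zero]
  refine Finset.sum_congr rfl fun a ha => ?_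
  rw [mem_range] at ha
  rw [if_pos (by omega : s+a ≤ k)]
  have e1 : (k-a)-s+1 = k+1-s-a := by omega
  rw [e1]

lemma gz_sumD (n k : ℕ) (hch : ∀ i, 0 < i → i < n → ((n.choose i : ℕ) : K) = 0)
    (h f g : ℕ → K) (hg : dpSupp n g) :
    ∑ j ∈ range (k+1), dpMul n ((dpDer n)^[j] f) ((dpDer n)^[k-j] (dpMul n g (dpDer n h)))
    = ∑ s ∈ range (k+2), ∑ a ∈ range (k+2-s),
        (if 1 ≤ s then (((k-a).choose (s-1) : ℕ) : K) else 0) • gzT n h f g s a (k+1-s-a) := by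
  have step1 : ∀ j ∈ range (k+1),
      dpMul n ((dpDer n)^[j] f) ((dpDer n)^[k-j] (dpMul n g (dpDer n h)))
      = ∑ u ∈ range (k+1-j), (((k-j).choose u : ℕ) : K) • gzT n h f g (u+1) j ((k-j)-u) := by
    intro j hj
    rw [mem_range] at hj
    have stepa : dpMul n ((dpDer n)^[j] f) ((dpDer n)^[k-j] (dpMul n g (dpDer n h)))
        = ∑ t ∈ range ((k-j)+1), (((k-j).choose t : ℕ) : K) • gzT n h f g ((k-j)-t+1) j t := by
      rw [dpDer_iter_dpMul n hch hg (dpSupp_dpDer n h) (k-j), dpMul_sum_right]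
      refine Finset.sum_congr rfl fun t _ => ?_
      rw [dpMul_smul_right]
      congr 1
      show dpMul n ((dpDer n)^[j] f)
          (dpMul n ((dpDer n)^[t] g) ((dpDer n)^[(k-j)-t] (dpDer n h))) = _
      rw [gz_rearr2]
      rfl
    rw [stepa,
      ← Finset.sum_range_reflect
        (fun t => (((k-j).choose t : ℕ) : K) • gzT n h f g ((k-j)-t+1) j t) ((k-j)+1)]
    have e : k+1-j = (k-j)+1 := by omega
    rw [e]
    refine Finset.sum_congr rfl fun u hu => ?_
    rw [mem_range] at hu
    have e1 : (k-j)+1-1-u = (k-j)-u := by omega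
    rw [e1]
    have e2 : (k-j)-((k-j)-u)+1 = u+1 := by omega
    rw [e2]
    have e3 : (k-j).choose ((k-j)-u) = (k-j).choose u := Nat.choose_symm (by omega)
    rw [e3]
  rw [Finset.sum_congr rfl step1,
    gz_sum_triangle_comm k (fun j u => (((k-j).choose u : ℕ) : K) • gzT n h f g (u+1) j ((k-j)-u))]
  rw [Finset.sum_range_succ' (fun s => ∑ a ∈ range (k+2-s),
    (if 1 ≤ s then (((k-a).choose (s-1) : ℕ) : K) else 0) • gzT n h f g s a (k+1-s-a)) (k+1)]
  have h0 : ∑ a ∈ range (k+2-0),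
      (if 1 ≤ 0 then (((k-a).choose (0-1) : ℕ) : K) else 0) • gzT n h f g 0 a (k+1-0-a) = 0 :=
    Finset.sum_eq_zero fun a _ => by rw [if_neg (by omega : ¬ 1 ≤ 0), zero_smul]
  rw [h0, add_zero]
  refine Finset.sum_congr rfl fun u hu => ?_
  rw [mem_range] at hu
  have e : k+2-(u+1) = k+1-u := by omega
  rw [e]
  refine Finset.sum_congr rfl fun a ha => ?_
  rw [mem_range] at ha
  rw [if_pos (by omega : 1 ≤ u+1)]
  have e1 : u+1-1 = u := by omega
  have e2 : k+1-(u+1)-a = (k-a)-u := by omega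
  rw [e1, e2]

end Sums2

section Final

variable {K : Type*} [Field K]

lemma gz_sumL [CharP K 2] (n k : ℕ) (hch : ∀ i, 0 < i → i < n → ((n.choose i : ℕ) : K) = 0)
    (h f g : ℕ → K) (hf : dpSupp n f) (hg : dpSupp n g) :
    dpMul n h (dpDer n (∑ j ∈ range (k+1), dpMul n ((dpDer n)^[j] f) ((dpDer n)^[k-j] g)))
    = ∑ s ∈ range (k+2), ∑ a ∈ range (k+2-s),
        (if s = 0 ∧ (a = 0 ∨ a = k+1) then (1:K) else 0) • gzT n h f g s a (k+1-s-a) := by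
  -- evaluate the right-hand side
  have hRHS : ∑ s ∈ range (k+2), ∑ a ∈ range (k+2-s),
        (if s = 0 ∧ (a = 0 ∨ a = k+1) then (1:K) else 0) • gzT n h f g s a (k+1-s-a)
      = gzT n h f g 0 0 (k+1) + gzT n h f g 0 (k+1) 0 := by
    rw [Finset.sum_range_succ' (fun s => ∑ a ∈ range (k+2-s),
      (if s = 0 ∧ (a = 0 ∨ a = k+1) then (1:K) else 0) • gzT n h f g s a (k+1-s-a)) (k+1)]
    have h1 : ∑ s ∈ range (k+1), ∑ a ∈ range (k+2-(s+1)),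
        (if s+1 = 0 ∧ (a = 0 ∨ a = k+1) then (1:K) else 0) • gzT n h f g (s+1) a (k+1-(s+1)-a) = 0 :=
      Finset.sum_eq_zero fun s _ => Finset.sum_eq_zero fun a _ => by
        rw [if_neg (by omega : ¬ (s+1 = 0 ∧ (a = 0 ∨ a = k+1))), zero_smul]
    rw [h1, zero_add]
    have e : k+2-0 = (k+1)+1 := by omega
    rw [e, Finset.sum_range_succ (fun a =>
      (if 0 = 0 ∧ (a = 0 ∨ a = k+1) then (1:K) else 0) • gzT n h f g 0 a (k+1-0-a)) (k+1)]
    rw [if_pos (by exact ⟨rfl, Or.inr rfl⟩ : 0 = 0 ∧ (k+1 = 0 ∨ k+1 = k+1)), one_smul]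
    rw [Finset.sum_range_succ' (fun a =>
      (if 0 = 0 ∧ (a = 0 ∨ a = k+1) then (1:K) else 0) • gzT n h f g 0 a (k+1-0-a)) k]
    have h2 : ∑ a ∈ range k,
        (if 0 = 0 ∧ (a+1 = 0 ∨ a+1 = k+1) then (1:K) else 0) • gzT n h f g 0 (a+1) (k+1-0-(a+1)) = 0 :=
      Finset.sum_eq_zero fun a ha => by
        rw [mem_range] at ha
        rw [if_neg (by omega : ¬ (0 = 0 ∧ (a+1 = 0 ∨ a+1 = k+1))), zero_smul]
    rw [h2, zero_add]
    rw [if_pos (by exact ⟨rfl, Or.inl rfl⟩ : 0 = 0 ∧ ((0:ℕ) = 0 ∨ 0 = k+1)), one_smul]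
    have e1 : k+1-0-0 = k+1 := by omega
    have e2 : k+1-0-(k+1) = 0 := by omega
    rw [e1, e2]
  rw [hRHS]
  -- now compute the left-hand side
  rw [dpDer_sum]
  have e1 : ∀ j ∈ range (k+1),
      dpDer n (dpMul n ((dpDer n)^[j] f) ((dpDer n)^[k-j] g))
      = dpMul n ((dpDer n)^[j+1] f) ((dpDer n)^[k-j] g)
        + dpMul n ((dpDer n)^[j] f) ((dpDer n)^[(k-j)+1] g) := by
    intro j _
    rw [dpDer_dpMul n hch (dpSupp_iter n hf j) (dpSupp_iter n hg (k-j)),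
      ← Function.iterate_succ_apply' (dpDer n) j f,
      ← Function.iterate_succ_apply' (dpDer n) (k-j) g]
  rw [Finset.sum_congr rfl e1, dpMul_sum_right]
  have e2 : ∀ j ∈ range (k+1),
      dpMul n h (dpMul n ((dpDer n)^[j+1] f) ((dpDer n)^[k-j] g)
        + dpMul n ((dpDer n)^[j] f) ((dpDer n)^[(k-j)+1] g))
      = dpMul n h (dpMul n ((dpDer n)^[j+1] f) ((dpDer n)^[k+1-(j+1)] g))
        + dpMul n h (dpMul n ((dpDer n)^[j] f) ((dpDer n)^[k+1-j] g)) := by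
    intro j hj
    rw [mem_range] at hj
    rw [dpMul_add_right]
    have ea : k-j = k+1-(j+1) := by omega
    have eb : (k-j)+1 = k+1-j := by omega
    rw [eb, ea]
  rw [Finset.sum_congr rfl e2, Finset.sum_add_distrib]
  set A : ℕ → ℕ → K := fun i => dpMul n h (dpMul n ((dpDer n)^[i] f) ((dpDer n)^[k+1-i] g)) with hA
  have e3 : (∑ j ∈ range (k+1), A (j+1)) + A 0 = (∑ j ∈ range (k+1), A j) + A (k+1) := by
    rw [← Finset.sum_range_succ' A (k+1), Finset.sum_range_succ]
  have hself : ∀ x : ℕ → K, x + x = 0 := fun x => funext fun r => CharTwo.add_self_eq_zero _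
  have key : (∑ j ∈ range (k+1), A (j+1)) + (∑ j ∈ range (k+1), A j) = A 0 + A (k+1) := by
    have h4 := hself (∑ j ∈ range (k+1), A j)
    have h5 := hself (A 0)
    linear_combination (norm := abel) e3 + h4 - h5
  rw [key]
  have hA0 : A 0 = gzT n h f g 0 0 (k+1) := by
    rw [hA]
    show dpMul n h (dpMul n ((dpDer n)^[0] f) ((dpDer n)^[k+1-0] g)) = _
    have e : k+1-0 = k+1 := by omega
    rw [e]
    unfold gzT
    rw [← dpMul_assoc]
    rfl
  have hAk : A (k+1) = gzT n h f g 0 (k+1) 0 := by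
    rw [hA]
    show dpMul n h (dpMul n ((dpDer n)^[k+1] f) ((dpDer n)^[k+1-(k+1)] g)) = _
    have e : k+1-(k+1) = 0 := by omega
    rw [e]
    unfold gzT
    rw [← dpMul_assoc]
    rfl
  rw [hA0, hAk]

end Final


/-- Gz : F_1 ⊗ F_1 → F_k is vect(1;N)-invariant in characteristic 2. -/
theorem GzTwo_invariant {K : Type*} [Field K] (m N : ℕ) (hm : 1 ≤ m)
    [CharP K 2] (k : ℕ) (hk : k = 2 ^ m - 2) (hkN : k / 2 < 2 ^ N)
    (h f g : ℕ → K)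
    (hh : dpSupp (2 ^ N) h) (hf : dpSupp (2 ^ N) f) (hg : dpSupp (2 ^ N) g) :
    dpLie (2 ^ N) (k : K) h (GzTwo (2 ^ N) k f g)
      = GzTwo (2 ^ N) k (dpLie (2 ^ N) 1 h f) g
        + GzTwo (2 ^ N) k f (dpLie (2 ^ N) 1 h g) := by
  have h2m : 2 ≤ 2^m := by
    calc 2 = 2^1 := rfl
    _ ≤ 2^m := Nat.pow_le_pow_right (by norm_num) hm
  have hpow : 2^m = 2 * 2^(m-1) := by
    have hm' : m - 1 + 1 = m := by omega
    calc 2^m = 2^(m-1+1) := by rw [hm']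
    _ = 2 * 2^(m-1) := by rw [pow_succ']
  have hk2 : k % 2 = 0 := by omega
  have hch : ∀ i, 0 < i → i < 2^N → (((2^N).choose i : ℕ) : K) = 0 := by
    intro i h0 h1
    have hd : 2 ∣ (2^N).choose i :=
      Nat.Prime.dvd_choose_pow Nat.prime_two (by omega) (by omega)
    exact gz_even_cast_zero (by omega)
  have hkK : ((k : ℕ) : K) = 0 := gz_even_cast_zero hk2
  have hL1 : ∀ x : ℕ → K, dpLie (2^N) 1 h x
      = dpMul (2^N) h (dpDer (2^N) x) + dpMul (2^N) x (dpDer (2^N) h) := by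
    intro x
    unfold dpLie
    rw [one_smul]
  show dpMul (2^N) h (dpDer (2^N) (GzTwo (2^N) k f g))
      + (k : K) • dpMul (2^N) (GzTwo (2^N) k f g) (dpDer (2^N) h) = _
  rw [hkK, zero_smul, add_zero]
  rw [GzTwo_eq_sum (2^N) k hk2 f g,
    GzTwo_eq_sum (2^N) k hk2 (dpLie (2^N) 1 h f) g,
    GzTwo_eq_sum (2^N) k hk2 f (dpLie (2^N) 1 h g)]
  have hAB : ∑ j ∈ range (k+1),
        dpMul (2^N) ((dpDer (2^N))^[j] (dpLie (2^N) 1 h f)) ((dpDer (2^N))^[k-j] g)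
      = (∑ j ∈ range (k+1),
          dpMul (2^N) ((dpDer (2^N))^[j] (dpMul (2^N) h (dpDer (2^N) f))) ((dpDer (2^N))^[k-j] g))
        + ∑ j ∈ range (k+1),
          dpMul (2^N) ((dpDer (2^N))^[j] (dpMul (2^N) f (dpDer (2^N) h))) ((dpDer (2^N))^[k-j] g) := by
    rw [← Finset.sum_add_distrib]
    refine Finset.sum_congr rfl fun j _ => ?_
    rw [hL1 f, dpDer_iter_add, dpMul_add_left]
  have hCD : ∑ j ∈ range (k+1),
        dpMul (2^N) ((dpDer (2^N))^[j] f) ((dpDer (2^N))^[k-j] (dpLie (2^N) 1 h g))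
      = (∑ j ∈ range (k+1),
          dpMul (2^N) ((dpDer (2^N))^[j] f) ((dpDer (2^N))^[k-j] (dpMul (2^N) h (dpDer (2^N) g))))
        + ∑ j ∈ range (k+1),
          dpMul (2^N) ((dpDer (2^N))^[j] f) ((dpDer (2^N))^[k-j] (dpMul (2^N) g (dpDer (2^N) h))) := by
    rw [← Finset.sum_add_distrib]
    refine Finset.sum_congr rfl fun j _ => ?_
    rw [hL1 g, dpDer_iter_add, dpMul_add_right]
  rw [hAB, hCD,
    gz_sumA (2^N) k hch h f g hh,
    gz_sumB (2^N) k hch h f g hf,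
    gz_sumC (2^N) k hch h f g hh,
    gz_sumD (2^N) k hch h f g hg,
    gz_sumL (2^N) k hch h f g hf hg]
  rw [← Finset.sum_add_distrib, ← Finset.sum_add_distrib, ← Finset.sum_add_distrib]
  refine Finset.sum_congr rfl fun s hs => ?_
  rw [mem_range] at hs
  rw [← Finset.sum_add_distrib, ← Finset.sum_add_distrib, ← Finset.sum_add_distrib]
  refine Finset.sum_congr rfl fun a ha => ?_
  rw [mem_range] at ha
  have hco := gz_coeff (K := K) hm hk s a (by omega) (by omega)
  rw [← hco, add_smul, add_smul, add_smul]
  abel
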